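/- arXiv:2406.03306 — 6 statements merged into one kernel-verified Lean document; each statement's English description precedes it below -/
import Mathlib

section
/- Let q be a natural number, let a ∈ [-1,1] and u ∈ ℝ satisfy |a − u| ≤ 2^{−q}, and let g ∈ ℝ satisfy |g − 2^q·(a − u)/π| ≤ 1/(2π). Define the updated estimate u' := max(−1, min(1, u + π·2^{−q}·g)) (i.e., u + π·2^{−q}·g truncated to [−1,1]). Then |a − u'| ≤ 2^{−(q+1)}. -/
/-- Correctness of one update step of the adaptive gradient-estimation algorithm:
if the temporal estimate `u` satisfies `|a - u| ≤ 2^(-q)` and the gradient-estimation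
output `g` satisfies `|g - 2^q (a - u)/π| ≤ 1/(2π)`, then the truncated updated estimate
`u' = max (-1) (min 1 (u + π 2^(-q) g))` satisfies `|a - u'| ≤ 2^(-(q+1))`. -/
theorem adaptive_update_step (q : ℕ) (a u g : ℝ)
    (ha : a ∈ Set.Icc (-1 : ℝ) 1)
    (hau : |a - u| ≤ (2 : ℝ) ^ (-(q : ℤ)))
    (hg : |g - 2 ^ q * (a - u) / Real.pi| ≤ 1 / (2 * Real.pi)) :
    |a - max (-1) (min 1 (u + Real.pi * (2 : ℝ) ^ (-(q : ℤ)) * g))| ≤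
      (2 : ℝ) ^ (-((q : ℤ) + 1)) := by
  obtain ⟨ha1, ha2⟩ := ha
  have hpi := Real.pi_pos
  set v := u + Real.pi * (2 : ℝ) ^ (-(q : ℤ)) * g with hv
  have hpow : (2 : ℝ) ^ (-(q : ℤ)) > 0 := by positivity
  have key : |a - v| ≤ (2 : ℝ) ^ (-((q : ℤ) + 1)) := by
    have h1 : a - v = -(Real.pi * (2 : ℝ) ^ (-(q : ℤ)) * (g - 2 ^ q * (a - u) / Real.pi)) := by
      have h2q : (2 : ℝ) ^ (-(q : ℤ)) * (2 : ℝ) ^ q = 1 := by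
        rw [← zpow_natCast (2 : ℝ) q, ← zpow_add₀ (by norm_num : (2:ℝ) ≠ 0)]
        simp
      field_simp [hv]
      linear_combination (u - a) * h2q - hv
    rw [h1, abs_neg, abs_mul, abs_mul, abs_of_pos hpi, abs_of_pos hpow]
    calc Real.pi * (2 : ℝ) ^ (-(q : ℤ)) * |g - 2 ^ q * (a - u) / Real.pi|
        ≤ Real.pi * (2 : ℝ) ^ (-(q : ℤ)) * (1 / (2 * Real.pi)) := by
          apply mul_le_mul_of_nonneg_left hg; positivity
      _ = (2 : ℝ) ^ (-((q : ℤ) + 1)) := by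
          rw [show (-((q:ℤ)+1)) = -(q:ℤ) + (-1) by ring,
            zpow_add₀ (by norm_num : (2:ℝ) ≠ 0), zpow_neg, zpow_natCast,
            show ((2:ℝ)^(-1:ℤ)) = 1/2 by norm_num]
          field_simp
  have hclamp : |a - max (-1) (min 1 v)| ≤ |a - v| := by
    rcases le_total v (-1) with h | h
    · rw [min_eq_right (by linarith : v ≤ 1), max_eq_left h]
      rw [abs_of_nonneg (by linarith), abs_of_nonneg (by linarith)]
      linarith
    · rcases le_total 1 v with h' | h'
      · rw [min_eq_left h', max_eq_right (by norm_num : (-1:ℝ) ≤ 1)]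
        rw [abs_of_nonpos (by linarith), abs_of_nonpos (by linarith)]
        linarith
      · rw [min_eq_right h', max_eq_right h]
  exact hclamp.trans key
end

section
/- Let ε ∈ (0,1), let Q := ⌈log₂(1/ε)⌉, and let c ∈ (0, 3/(8(1+π)²)]. Then 2^{−2(Q+1)} + (1+π)² · Σ_{q=0}^{Q} (c/8^{Q−q}) · 4^{−q} ≤ ε². -/
/-- The mean-squared-error budget of Theorem 2: with `Q = ⌈log₂(1/ε)⌉` iterations,
failure probabilities `δ^(q) = c/8^(Q-q)`, all-success squared error `2^(-2(Q+1))`,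
and first-failure-at-`q` squared error `(1+π)² 4^(-q)`, the total MSE is at most `ε²`. -/
theorem mse_budget (ε c : ℝ) (hε : ε ∈ Set.Ioo (0 : ℝ) 1)
    (hc : c ∈ Set.Ioc (0 : ℝ) (3 / (8 * (1 + Real.pi) ^ 2))) :
    (2 : ℝ) ^ (-(2 * ((⌈Real.logb 2 (1 / ε)⌉₊ : ℤ) + 1))) +
      (1 + Real.pi) ^ 2 *
        ∑ q ∈ Finset.range (⌈Real.logb 2 (1 / ε)⌉₊ + 1),
          (c / (8 : ℝ) ^ (⌈Real.logb 2 (1 / ε)⌉₊ - q)) * (4 : ℝ) ^ (-(q : ℤ)) ≤ ε ^ 2 := by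
  obtain ⟨hε0, hε1⟩ := hε
  obtain ⟨hc0, hc1⟩ := hc
  set Q := ⌈Real.logb 2 (1 / ε)⌉₊ with hQ
  have hπ : (0:ℝ) < (1 + Real.pi)^2 := by positivity
  have hA : (0:ℝ) < (2:ℝ)^Q := by positivity
  -- key: 1/ε ≤ 2^Q
  have hkey : 1 / ε ≤ (2:ℝ)^Q := by
    have h1 : Real.logb 2 (1/ε) ≤ (Q:ℝ) := Nat.le_ceil _
    have h2 : (2:ℝ) ^ (Real.logb 2 (1/ε)) ≤ (2:ℝ) ^ (Q:ℝ) :=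
      Real.rpow_le_rpow_of_exponent_le (by norm_num) h1
    rwa [Real.rpow_logb (by norm_num) (by norm_num) (by positivity),
      Real.rpow_natCast] at h2
  have he : ((2:ℝ)^Q)⁻¹ ≤ ε := by
    rw [div_le_iff₀ hε0] at hkey
    rw [inv_le_iff_one_le_mul₀ hA]
    linarith
  have he0 : (0:ℝ) < ((2:ℝ)^Q)⁻¹ := by positivity
  -- rewrite first term
  have hfirst : (2:ℝ) ^ (-(2 * ((Q:ℤ) + 1))) = (((2:ℝ)^Q)⁻¹)^2 / 4 := by
    have h : (2 * ((Q:ℤ) + 1)) = ((2*Q+2 : ℕ) : ℤ) := by push_cast; ring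
    rw [h, zpow_neg, zpow_natCast]
    rw [show 2*Q+2 = Q + Q + 2 by ring, pow_add, pow_add]
    rw [mul_inv, mul_inv]
    ring
  -- rewrite the sum
  have hsum : ∑ q ∈ Finset.range (Q+1), (c/(8:ℝ)^(Q-q)) * (4:ℝ)^(-(q:ℤ))
      = (c/(8:ℝ)^Q) * ∑ q ∈ Finset.range (Q+1), (2:ℝ)^q := by
    rw [Finset.mul_sum]
    refine Finset.sum_congr rfl fun q hq => ?_
    have hqQ : q ≤ Q := Nat.lt_succ_iff.mp (Finset.mem_range.mp hq)
    have h8 : (8:ℝ)^Q = 8^(Q-q) * 8^q := by rw [← pow_add, Nat.sub_add_cancel hqQ]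
    have h4 : (4:ℝ)^(-(q:ℤ)) = ((4:ℝ)^q)⁻¹ := by rw [zpow_neg, zpow_natCast]
    have h84 : (8:ℝ)^q = 2^q * 4^q := by rw [← mul_pow]; norm_num
    rw [h4, h8, h84]
    have h1 : ((8:ℝ)^(Q-q)) ≠ 0 := by positivity
    have h2 : ((4:ℝ)^q) ≠ 0 := by positivity
    have h3 : ((2:ℝ)^q) ≠ 0 := by positivity
    field_simp
  have hgeom : ∑ q ∈ Finset.range (Q+1), (2:ℝ)^q = 2^(Q+1) - 1 := by
    rw [geom_sum_eq (by norm_num)]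
    norm_num
  have h84Q : (8:ℝ)^Q = 2^Q * 4^Q := by rw [← mul_pow]; norm_num
  have h4Q : (4:ℝ)^Q = ((2:ℝ)^Q)^2 := by rw [← pow_mul, pow_mul']; norm_num
  have hsumle : (c/(8:ℝ)^Q) * ((2:ℝ)^(Q+1) - 1) ≤ 2 * c * (((2:ℝ)^Q)⁻¹)^2 := by
    have h1 : ((2:ℝ)^(Q+1) - 1) ≤ 2 * 2^Q := by rw [pow_succ]; nlinarith
    have h2 : (0:ℝ) < (8:ℝ)^Q := by positivity
    rw [div_mul_eq_mul_div, div_le_iff₀ h2]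
    have : (((2:ℝ)^Q)⁻¹)^2 * (8:ℝ)^Q = 2 ^ Q := by
      rw [h84Q, h4Q]
      field_simp
    nlinarith
  rw [hfirst, hsum, hgeom]
  have hc1' : c * (1 + Real.pi)^2 ≤ 3/8 := by
    rw [le_div_iff₀ (by positivity)] at hc1
    nlinarith
  have hee : (((2:ℝ)^Q)⁻¹)^2 ≤ ε^2 := by nlinarith
  calc (((2:ℝ)^Q)⁻¹)^2 / 4 + (1 + Real.pi)^2 * (c/(8:ℝ)^Q * ((2:ℝ)^(Q+1) - 1))
      ≤ (((2:ℝ)^Q)⁻¹)^2 / 4 + (1 + Real.pi)^2 * (2 * c * (((2:ℝ)^Q)⁻¹)^2) := by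
        nlinarith [mul_le_mul_of_nonneg_left hsumle (le_of_lt hπ)]
    _ ≤ ε^2 := by nlinarith
end

section
/- For every real number x with |x| ≤ 1/4, one has |arccos(x) − π/2 + x| ≤ |x|³/5. -/
open Real Set

private lemma arcsin_key (x : ℝ) (h0 : 0 ≤ x) (h1 : x ≤ 1/4) :
    x ≤ Real.arcsin x ∧ Real.arcsin x ≤ x + x ^ 3 / 5 := by
  constructor
  · have h := Real.sin_le (Real.arcsin_nonneg.2 h0)
    rwa [Real.sin_arcsin (by linarith) (by linarith)] at h
  · set F : ℝ → ℝ := fun t => t + t ^ 3 / 5 - Real.arcsin t with hF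
    have hmono : MonotoneOn F (Icc (0:ℝ) (1/4)) := by
      apply monotoneOn_of_deriv_nonneg (convex_Icc _ _)
      · exact (continuous_id.add ((continuous_pow 3).div_const 5)).continuousOn.sub
          Real.continuous_arcsin.continuousOn
      · intro t ht
        rw [interior_Icc] at ht
        have hd : HasDerivAt F (1 + ↑3 * t ^ 2 / 5 - 1 / Real.sqrt (1 - t ^ 2)) t := by
          exact ((hasDerivAt_id t).add ((hasDerivAt_pow 3 t).div_const 5)).sub
            (Real.hasDerivAt_arcsin (by norm_num; linarith [ht.1]) (by norm_num; linarith [ht.2]))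
        exact hd.differentiableAt.differentiableWithinAt
      · intro t ht
        rw [interior_Icc] at ht
        obtain ⟨ht0, ht1⟩ := ht
        have hd : HasDerivAt F (1 + ↑3 * t ^ 2 / 5 - 1 / Real.sqrt (1 - t ^ 2)) t := by
          exact ((hasDerivAt_id t).add ((hasDerivAt_pow 3 t).div_const 5)).sub
            (Real.hasDerivAt_arcsin (by norm_num; linarith) (by norm_num; linarith))
        rw [hd.deriv]
        have hs : 0 < Real.sqrt (1 - t ^ 2) := Real.sqrt_pos.2 (by nlinarith)
        have hs2 : Real.sqrt (1 - t ^ 2) ^ 2 = 1 - t ^ 2 :=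
          Real.sq_sqrt (by nlinarith)
        rw [sub_nonneg, div_le_iff₀ hs]
        have hsq : 1 ≤ (1 + 3 * t ^ 2 / 5) ^ 2 * Real.sqrt (1 - t ^ 2) ^ 2 := by
          rw [hs2]
          have hu : t ^ 2 ≤ 1 / 16 := by nlinarith
          have h5 : (0:ℝ) ≤ 5 - 21 * t ^ 2 - 9 * (t ^ 2) ^ 2 := by nlinarith [sq_nonneg t]
          nlinarith [mul_nonneg (sq_nonneg t) h5]
        have hpos : 0 < (1 + 3 * t ^ 2 / 5) * Real.sqrt (1 - t ^ 2) :=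
          mul_pos (by positivity) hs
        nlinarith [hsq, hpos]
    have h := hmono (by constructor <;> norm_num) (⟨h0, h1⟩ : x ∈ Icc (0:ℝ) (1/4)) h0
    simp only [hF, Real.arcsin_zero] at h
    norm_num at h
    linarith

/-- Cubic bound on the non-linearity of `arccos`: for `|x| ≤ 1/4`,
`|arccos x - π/2 + x| ≤ |x|³/5`. -/
theorem arccos_linear_approx (x : ℝ) (hx : |x| ≤ 1 / 4) :
    |Real.arccos x - Real.pi / 2 + x| ≤ |x| ^ 3 / 5 := by
  rw [Real.arccos]
  have key : ∀ y : ℝ, 0 ≤ y → y ≤ 1/4 → |π / 2 - Real.arcsin y - π / 2 + y| ≤ |y| ^ 3 / 5 := by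
    intro y h0 h1
    obtain ⟨hl, hu⟩ := arcsin_key y h0 h1
    rw [abs_of_nonneg h0, abs_of_nonpos (by linarith)]
    linarith
  rcases le_or_gt 0 x with h | h
  · exact key x h (by rwa [abs_of_nonneg h] at hx)
  · have h' := key (-x) (by linarith) (by rwa [abs_of_nonpos h.le] at hx)
    rw [Real.arcsin_neg, abs_neg] at h'
    calc |π / 2 - Real.arcsin x - π / 2 + x| = |π / 2 - -Real.arcsin x - π / 2 + -x| := by
          rw [← abs_neg]; ring_nf
      _ ≤ |x| ^ 3 / 5 := h'
end

section
/- For a positive integer p, let G_p denote the grid {μ/2^p − 1/2 + 1/2^{p+1} : μ ∈ {0,1,…,2^p−1}} ⊂ ℝ. Let p, M be positive integers, δ' ∈ (0,1), and let w_1,…,w_{M+1} be real numbers, not all zero. Then the number of tuples (x_1,…,x_M,y) ∈ G_p^M × G_1 satisfying |Σ_{j=1}^{M} w_j x_j + w_{M+1}·y| < √((ln(2/δ')/2) · Σ_{j=1}^{M+1} w_j²) is at least (1−δ')·2^{pM+1}. -/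
/-- The grid `G_p = {μ/2^p - 1/2 + 1/2^(p+1) : μ ∈ {0,…,2^p-1}} ⊂ ℝ`. -/
def gridG (p : ℕ) : Set ℝ :=
  {x | ∃ μ : ℕ, μ < 2 ^ p ∧ x = (μ : ℝ) / 2 ^ p - 1 / 2 + 1 / 2 ^ (p + 1)}

open Finset Real

noncomputable def gridF (p : ℕ) : Finset ℝ :=
  (Finset.range (2 ^ p)).image (fun μ : ℕ => (μ : ℝ) / 2 ^ p - 1 / 2 + 1 / 2 ^ (p + 1))

lemma gridF_inj (p : ℕ) : Function.Injective
    (fun μ : ℕ => (μ : ℝ) / 2 ^ p - 1 / 2 + 1 / 2 ^ (p + 1)) := by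
  intro a b h
  have h2 : (0:ℝ) < 2 ^ p := by positivity
  simp only [add_left_inj, sub_left_inj] at h
  exact_mod_cast (div_left_inj' h2.ne').mp h

lemma gridF_card (p : ℕ) : (gridF p).card = 2 ^ p := by
  rw [gridF, Finset.card_image_of_injective _ (gridF_inj p), Finset.card_range]

lemma sum_range_cast (n : ℕ) : ∑ i ∈ Finset.range n, (i : ℝ) = (n * n - n) / 2 := by
  induction n with
  | zero => simp
  | succ n ih => rw [Finset.sum_range_succ, ih]; push_cast; ring

lemma gridF_sum (p : ℕ) : ∑ x ∈ gridF p, x = 0 := by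
  rw [gridF, Finset.sum_image (fun a _ b _ h => gridF_inj p h)]
  have h2 : (2:ℝ) ^ p ≠ 0 := by positivity
  rw [Finset.sum_add_distrib, Finset.sum_sub_distrib, ← Finset.sum_div, sum_range_cast]
  simp only [Finset.sum_const, Finset.card_range, nsmul_eq_mul, pow_succ]
  push_cast
  field_simp
  ring

lemma gridF_abs {p : ℕ} {x : ℝ} (hx : x ∈ gridF p) : |x| ≤ 1 / 2 := by
  rw [gridF, Finset.mem_image] at hx
  obtain ⟨μ, hμ, rfl⟩ := hx
  rw [Finset.mem_range] at hμ
  have h2 : (0:ℝ) < 2 ^ p := by positivity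
  have hμ' : (μ:ℝ) + 1 ≤ 2 ^ p := by exact_mod_cast hμ
  have hμ0 : (0:ℝ) ≤ (μ:ℝ) := Nat.cast_nonneg μ
  rw [abs_le, pow_succ]
  constructor
  · rw [div_mul_eq_div_div]
    have h1 : (0:ℝ) ≤ (μ:ℝ) / 2 ^ p := by positivity
    have h3 : (0:ℝ) < 1 / 2 ^ p / 2 := by positivity
    linarith
  · rw [div_mul_eq_div_div]
    have h1 : (μ:ℝ) / 2 ^ p ≤ 1 - 1 / 2 ^ p := by
      rw [div_le_iff₀ h2]; field_simp; linarith
    have h3 : (0:ℝ) < 1 / 2 ^ p := by positivity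
    linarith

lemma gridG_eq (p : ℕ) : gridG p = ↑(gridF p) := by
  ext x
  simp only [gridG, gridF, Set.mem_setOf_eq, Finset.coe_image, Set.mem_image,
    Finset.coe_range, Set.mem_Iio]
  constructor
  · rintro ⟨μ, h1, h2⟩; exact ⟨μ, h1, h2.symm⟩
  · rintro ⟨μ, h1, h2⟩; exact ⟨μ, h1, h2.symm⟩

/-- Hoeffding's lemma on the grid: the average of `exp (u x)` is at most `exp (u²/8)`. -/
lemma gridF_exp_sum_le (p : ℕ) (u : ℝ) :
    ∑ x ∈ gridF p, Real.exp (u * x) ≤ 2 ^ p * Real.exp (u ^ 2 / 8) := by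
  have key : ∀ x ∈ gridF p,
      Real.exp (u * x) ≤ (1/2 - x) * Real.exp (-(u/2)) + (1/2 + x) * Real.exp (u/2) := by
    intro x hx
    have habs := gridF_abs hx
    rw [abs_le] at habs
    have ha : (0:ℝ) ≤ 1/2 - x := by linarith [habs.2]
    have hb : (0:ℝ) ≤ 1/2 + x := by linarith [habs.1]
    have hab : (1/2 - x) + (1/2 + x) = 1 := by ring
    have := convexOn_exp.2 (Set.mem_univ (-(u/2))) (Set.mem_univ (u/2)) ha hb hab
    simp only [smul_eq_mul] at this
    calc Real.exp (u * x) = Real.exp ((1/2 - x) * (-(u/2)) + (1/2 + x) * (u/2)) := by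
          ring_nf
      _ ≤ (1/2 - x) * Real.exp (-(u/2)) + (1/2 + x) * Real.exp (u/2) := this
  calc ∑ x ∈ gridF p, Real.exp (u * x)
      ≤ ∑ x ∈ gridF p, ((1/2 - x) * Real.exp (-(u/2)) + (1/2 + x) * Real.exp (u/2)) :=
        Finset.sum_le_sum key
    _ = 2 ^ p * Real.cosh (u/2) := by
        rw [Finset.sum_add_distrib, ← Finset.sum_mul, ← Finset.sum_mul,
          Finset.sum_sub_distrib, Finset.sum_add_distrib, gridF_sum,
          Finset.sum_const, gridF_card, Real.cosh_eq]
        push_cast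
        ring
    _ ≤ 2 ^ p * Real.exp ((u/2) ^ 2 / 2) := by
        have := Real.cosh_le_exp_half_sq (u/2)
        have h2 : (0:ℝ) ≤ 2 ^ p := by positivity
        nlinarith
    _ = 2 ^ p * Real.exp (u ^ 2 / 8) := by ring_nf

/-- Hoeffding-type cardinality bound (Lemma 14): for weights `w_1,…,w_{M+1}` not all
zero, the number of tuples `(x, y) ∈ G_p^M × G_1` with
`|Σ_j w_j x_j + w_{M+1} y| < √((ln(2/δ')/2) Σ_j w_j²)` is at least `(1-δ') 2^(pM+1)`. -/
theorem hoeffding_grid_count (p M : ℕ) (hp : 0 < p) (hM : 0 < M)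
    (δ' : ℝ) (hδ' : δ' ∈ Set.Ioo (0 : ℝ) 1)
    (w : Fin (M + 1) → ℝ) (hw : w ≠ 0) :
    (1 - δ') * 2 ^ (p * M + 1) ≤
      ({ xy : (Fin M → ℝ) × ℝ |
          (∀ j, xy.1 j ∈ gridG p) ∧ xy.2 ∈ gridG 1 ∧
          |(∑ j : Fin M, w j.castSucc * xy.1 j) + w (Fin.last M) * xy.2| <
            Real.sqrt ((Real.log (2 / δ') / 2) * ∑ j : Fin (M + 1), (w j) ^ 2) }.ncard : ℝ) := by
  obtain ⟨hδ0, hδ1⟩ := hδ'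
  set W : ℝ := ∑ j : Fin (M + 1), (w j) ^ 2 with hW
  have hWpos : 0 < W := by
    obtain ⟨j, hj⟩ := Function.ne_iff.mp hw
    exact Finset.sum_pos' (fun i _ => sq_nonneg _)
      ⟨j, Finset.mem_univ j, sq_pos_of_ne_zero hj⟩
  have hlogpos : 0 < Real.log (2 / δ') := by
    apply Real.log_pos
    rw [lt_div_iff₀ hδ0]; linarith
  set t : ℝ := Real.sqrt ((Real.log (2 / δ') / 2) * W) with ht
  have htpos : 0 < t := Real.sqrt_pos.mpr (by positivity)
  have ht2 : t ^ 2 = (Real.log (2 / δ') / 2) * W := Real.sq_sqrt (by positivity)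
  set lam : ℝ := 4 * t / W with hlam
  -- the sum functional
  set f : (Fin M → ℝ) × ℝ → ℝ :=
    fun xy => (∑ j : Fin M, w j.castSucc * xy.1 j) + w (Fin.last M) * xy.2 with hf
  -- the ambient finset
  set A : Finset ((Fin M → ℝ) × ℝ) :=
    (Fintype.piFinset fun _ : Fin M => gridF p) ×ˢ gridF 1 with hA
  have hAcard : A.card = 2 ^ (p * M + 1) := by
    rw [hA, Finset.card_product, Fintype.card_piFinset]
    simp only [gridF_card, Finset.prod_const, Finset.card_univ, Fintype.card_fin]
    rw [← pow_mul, ← pow_add]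
  -- Markov / Chernoff bound on each side, for any real c
  have markov : ∀ c : ℝ,
      ∑ xy ∈ A, Real.exp (c * f xy) ≤ 2 ^ (p * M + 1) * Real.exp (c ^ 2 * W / 8) := by
    intro c
    have split : ∀ xy : (Fin M → ℝ) × ℝ,
        Real.exp (c * f xy)
          = (∏ j : Fin M, Real.exp ((c * w j.castSucc) * xy.1 j))
            * Real.exp ((c * w (Fin.last M)) * xy.2) := by
      intro xy
      rw [← Real.exp_sum, ← Real.exp_add, hf]
      congr 1
      simp only [hf, mul_add, Finset.mul_sum, mul_assoc]
    calc ∑ xy ∈ A, Real.exp (c * f xy)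
        = (∑ x ∈ Fintype.piFinset (fun _ : Fin M => gridF p),
              ∏ j : Fin M, Real.exp ((c * w j.castSucc) * x j))
            * ∑ y ∈ gridF 1, Real.exp ((c * w (Fin.last M)) * y) := by
          rw [hA, Finset.sum_product, Finset.sum_mul_sum]
          exact Finset.sum_congr rfl fun x _ => Finset.sum_congr rfl fun y _ => split (x, y)
      _ = (∏ j : Fin M, ∑ v ∈ gridF p, Real.exp ((c * w j.castSucc) * v))
            * ∑ y ∈ gridF 1, Real.exp ((c * w (Fin.last M)) * y) := by
          rw [Finset.prod_univ_sum]
      _ ≤ (∏ j : Fin M, 2 ^ p * Real.exp ((c * w j.castSucc) ^ 2 / 8))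
            * (2 ^ 1 * Real.exp ((c * w (Fin.last M)) ^ 2 / 8)) := by
          apply mul_le_mul
          · apply Finset.prod_le_prod
            · intro j _; positivity
            · intro j _; exact gridF_exp_sum_le p _
          · exact gridF_exp_sum_le 1 _
          · positivity
          · positivity
      _ = 2 ^ (p * M + 1) * Real.exp (c ^ 2 * W / 8) := by
          rw [Finset.prod_mul_distrib, Finset.prod_const, ← Real.exp_sum,
            Finset.card_univ, Fintype.card_fin, mul_mul_mul_comm, ← Real.exp_add,
            ← pow_mul, ← pow_add]
          congr 1
          rw [hW, Fin.sum_univ_castSucc, mul_add, add_div, Finset.mul_sum, Finset.sum_div]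
          simp only [mul_pow]
  -- bound on the bad counts
  have hexp : Real.exp (lam ^ 2 * W / 8 - lam * t) = δ' / 2 := by
    have hW0 : W ≠ 0 := ne_of_gt hWpos
    have h1 : lam ^ 2 * W / 8 - lam * t = -(2 * t ^ 2 / W) := by
      rw [hlam]; field_simp; ring
    have h2 : -(2 * t ^ 2 / W) = -Real.log (2 / δ') := by
      rw [ht2]; field_simp
    rw [h1, h2, Real.exp_neg, Real.exp_log (div_pos two_pos hδ0), inv_div]
  have count_side : ∀ (B : Finset ((Fin M → ℝ) × ℝ)) (c : ℝ), B ⊆ A → c ^ 2 = lam ^ 2 →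
      (∀ xy ∈ B, lam * t ≤ c * f xy) →
      (B.card : ℝ) ≤ δ' / 2 * 2 ^ (p * M + 1) := by
    intro B c hBA hc2 hBf
    have h1 : (B.card : ℝ) * Real.exp (lam * t) ≤ ∑ xy ∈ A, Real.exp (c * f xy) := by
      calc (B.card : ℝ) * Real.exp (lam * t)
          = ∑ _xy ∈ B, Real.exp (lam * t) := by rw [Finset.sum_const, nsmul_eq_mul]
        _ ≤ ∑ xy ∈ B, Real.exp (c * f xy) :=
            Finset.sum_le_sum fun xy hxy => Real.exp_le_exp.mpr (hBf xy hxy)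
        _ ≤ ∑ xy ∈ A, Real.exp (c * f xy) :=
            Finset.sum_le_sum_of_subset_of_nonneg hBA fun xy _ _ => (Real.exp_pos _).le
    have h2 := (markov c).trans_eq' rfl
    have h3 : (B.card : ℝ) * Real.exp (lam * t)
        ≤ 2 ^ (p * M + 1) * Real.exp (lam ^ 2 * W / 8) := by
      rw [← hc2]; exact h1.trans h2
    have hepos : (0:ℝ) < Real.exp (lam * t) := Real.exp_pos _
    have h4 : (B.card : ℝ) ≤ 2 ^ (p * M + 1) * Real.exp (lam ^ 2 * W / 8)
        / Real.exp (lam * t) := (le_div_iff₀ hepos).mpr h3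
    rwa [mul_div_assoc, ← Real.exp_sub, hexp, mul_comm] at h4
  -- the two bad sets
  set Bp : Finset ((Fin M → ℝ) × ℝ) := A.filter (fun xy => t ≤ f xy) with hBp
  set Bm : Finset ((Fin M → ℝ) × ℝ) := A.filter (fun xy => f xy ≤ -t) with hBm
  have hlampos : 0 < lam := by positivity
  have hBpcard : (Bp.card : ℝ) ≤ δ' / 2 * 2 ^ (p * M + 1) := by
    apply count_side Bp lam (Finset.filter_subset _ _) rfl
    intro xy hxy
    rw [hBp, Finset.mem_filter] at hxy
    exact mul_le_mul_of_nonneg_left hxy.2 hlampos.le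
  have hBmcard : (Bm.card : ℝ) ≤ δ' / 2 * 2 ^ (p * M + 1) := by
    apply count_side Bm (-lam) (Finset.filter_subset _ _) (by ring)
    intro xy hxy
    rw [hBm, Finset.mem_filter] at hxy
    have := mul_le_mul_of_nonneg_left (neg_le_neg hxy.2) hlampos.le
    calc lam * t = lam * -(-t) := by ring
      _ ≤ lam * -f xy := this
      _ = -lam * f xy := by ring
  -- the good set
  set G : Finset ((Fin M → ℝ) × ℝ) := A.filter (fun xy => |f xy| < t) with hG
  have hsubset : A.filter (fun xy => ¬ |f xy| < t) ⊆ Bp ∪ Bm := by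
    intro xy hxy
    rw [Finset.mem_filter] at hxy
    rw [Finset.mem_union, hBp, hBm, Finset.mem_filter, Finset.mem_filter]
    rcases le_abs.mp (not_lt.mp hxy.2) with h | h
    · exact Or.inl ⟨hxy.1, h⟩
    · exact Or.inr ⟨hxy.1, by linarith⟩
  have hGcard : (1 - δ') * 2 ^ (p * M + 1) ≤ (G.card : ℝ) := by
    have hsplit := Finset.card_filter_add_card_filter_not
      (p := fun xy => |f xy| < t) (s := A)
    have hbad : ((A.filter (fun xy => ¬ |f xy| < t)).card : ℝ) ≤ δ' * 2 ^ (p * M + 1) := by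
      calc ((A.filter (fun xy => ¬ |f xy| < t)).card : ℝ)
          ≤ ((Bp ∪ Bm).card : ℝ) := by exact_mod_cast Finset.card_le_card hsubset
        _ ≤ (Bp.card : ℝ) + Bm.card := by exact_mod_cast Finset.card_union_le _ _
        _ ≤ δ' * 2 ^ (p * M + 1) := by linarith
    have hGA : (G.card : ℝ) + (A.filter (fun xy => ¬ |f xy| < t)).card
        = 2 ^ (p * M + 1) := by
      rw [hG]; exact_mod_cast (hAcard ▸ hsplit : _)
    linarith
  -- identify the set with ↑G
  have hset : { xy : (Fin M → ℝ) × ℝ |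
      (∀ j, xy.1 j ∈ gridG p) ∧ xy.2 ∈ gridG 1 ∧
      |(∑ j : Fin M, w j.castSucc * xy.1 j) + w (Fin.last M) * xy.2| < t } = ↑G := by
    ext xy
    simp only [Set.mem_setOf_eq, hG, Finset.coe_filter, hA, Finset.mem_product,
      Fintype.mem_piFinset, gridG_eq, Finset.mem_coe, hf]
    tauto
  calc (1 - δ') * 2 ^ (p * M + 1) ≤ (G.card : ℝ) := hGcard
    _ = _ := by rw [hset, Set.ncard_coe_finset]
end

section
/- Let m, d be positive integers, let c_1,…,c_m be positive reals with ‖c‖₁ := Σ_i c_i, let U_1,…,U_m be d×d complex matrices, and let V be an m×m complex matrix whose first column (the image of the first standard basis vector e_1) equals Σ_{i=1}^{m} √(c_i/‖c‖₁)·e_i. Define the md×md block-diagonal matrix W := Σ_{i=1}^{m} (e_i e_i*) ⊗ U_i (Kronecker product). Then (e_1* ⊗ I_d) · (V* ⊗ I_d) · W · (V ⊗ I_d) · (e_1 ⊗ I_d) = (1/‖c‖₁) · Σ_{i=1}^{m} c_i · U_i, i.e., the top-left d×d block of (V* ⊗ I_d) W (V ⊗ I_d) is the normalized linear combination ‖c‖₁^{−1}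 Σ_i c_i U_i. -/
open Matrix Kronecker

/-- Correctness of the linear combination of unitaries (LCU) method (Fig. 2):
if the first column of the PREPARE matrix `V` is `Σ_i √(c_i/‖c‖₁) e_i` and
`W = Σ_i |i⟩⟨i| ⊗ U_i` is the SELECT matrix, then the top-left `d × d` block of
`(V† ⊗ I_d) W (V ⊗ I_d)` equals `‖c‖₁⁻¹ Σ_i c_i U_i`. -/
theorem lcu_correctness (m d : ℕ) (hm : 0 < m) (hd : 0 < d)
    (c : Fin m → ℝ) (hc : ∀ i, 0 < c i)
    (U : Fin m → Matrix (Fin d) (Fin d) ℂ)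
    (V : Matrix (Fin m) (Fin m) ℂ)
    (hV : ∀ i, V i ⟨0, hm⟩ = ((Real.sqrt (c i / ∑ j, c j) : ℝ) : ℂ)) :
    ∀ j k : Fin d,
      (((Vᴴ ⊗ₖ (1 : Matrix (Fin d) (Fin d) ℂ)) *
          (∑ i, Matrix.single i i 1 ⊗ₖ U i) *
          (V ⊗ₖ (1 : Matrix (Fin d) (Fin d) ℂ)) :
            Matrix (Fin m × Fin d) (Fin m × Fin d) ℂ)) (⟨0, hm⟩, j) (⟨0, hm⟩, k) =
        ((((∑ i, c i)⁻¹ : ℝ) : ℂ)) * ∑ i, (c i : ℂ) * U i j k := by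
  intro j k
  have hs : (0:ℝ) < ∑ i, c i := Finset.sum_pos (fun i _ => hc i) ⟨⟨0, hm⟩, Finset.mem_univ _⟩
  simp only [Matrix.mul_apply, Matrix.sum_apply, Matrix.kroneckerMap_apply,
    Matrix.conjTranspose_apply, Fintype.sum_prod_type, Matrix.one_apply,
    Matrix.single, Matrix.of_apply, mul_ite, mul_zero, mul_one, ite_mul, zero_mul,
    ite_and, Finset.sum_ite_irrel, Finset.sum_const_zero, Finset.sum_ite_eq, Finset.sum_ite_eq', Finset.mem_univ, if_true, one_mul]
  rw [Finset.mul_sum]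
  refine Finset.sum_congr rfl fun x _ => ?_
  rw [hV, Complex.star_def, Complex.conj_ofReal]
  rw [mul_comm _ (U x j k), mul_assoc, ← Complex.ofReal_mul,
    Real.mul_self_sqrt (div_nonneg (hc x).le hs.le)]
  push_cast [ne_of_gt hs]
  ring
end

section
/- Let a, d be positive integers, let W be a unitary (a·d)×(a·d) complex matrix indexed by the product {1,…,a}×{1,…,d}, let U be a unitary d×d complex matrix, and let ε ∈ [0,1]. Suppose the top-left d×d block of W satisfies ‖(e_1* ⊗ I_d)·W·(e_1 ⊗ I_d) − U‖ ≤ ε in operator norm, where e_1 is the first standard basis vector of ℂ^a. Then for every unit vector ψ ∈ ℂ^d, ‖W(e_1 ⊗ ψ) − e_1 ⊗ (Uψ)‖ ≤ ε + √(2ε). -/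
noncomputable def BEembed {a d : ℕ} (e0 : Fin a) (v : EuclideanSpace ℂ (Fin d)) :
    EuclideanSpace ℂ (Fin a × Fin d) :=
  (WithLp.equiv 2 ((Fin a × Fin d) → ℂ)).symm (fun pq => if pq.1 = e0 then v pq.2 else 0)

lemma BEembed_apply {a d : ℕ} (e0 : Fin a) (v : EuclideanSpace ℂ (Fin d)) (pq : Fin a × Fin d) :
    BEembed e0 v pq = if pq.1 = e0 then v pq.2 else 0 := rfl

lemma BEembed_norm {a d : ℕ} (e0 : Fin a) (v : EuclideanSpace ℂ (Fin d)) :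
    ‖BEembed e0 v‖ = ‖v‖ := by
  rw [EuclideanSpace.norm_eq, EuclideanSpace.norm_eq]
  congr 1
  rw [Fintype.sum_prod_type]
  simp [BEembed_apply, apply_ite (fun t : ℂ => ‖t‖ ^ 2), Finset.sum_ite_eq']

lemma BEembed_sub {a d : ℕ} (e0 : Fin a) (v w : EuclideanSpace ℂ (Fin d)) :
    BEembed e0 v - BEembed e0 w = BEembed e0 (v - w) := by
  ext pq
  simp only [PiLp.sub_apply, BEembed_apply]
  split <;> simp

lemma BEembed_zeroblock {a d : ℕ} (e0 : Fin a)
    (W : Matrix (Fin a × Fin d) (Fin a × Fin d) ℂ) (ψ : EuclideanSpace ℂ (Fin d)) (j : Fin d) :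
    (Matrix.toEuclideanCLM (𝕜 := ℂ) W (BEembed e0 ψ)) (e0, j) =
      (Matrix.toEuclideanCLM (𝕜 := ℂ)
        (Matrix.of (fun j k : Fin d => W (e0, j) (e0, k))) ψ) j := by
  have h1 : (Matrix.toEuclideanCLM (𝕜 := ℂ) W (BEembed e0 ψ)) (e0, j) =
      ∑ qk : Fin a × Fin d, W (e0, j) qk * (if qk.1 = e0 then ψ qk.2 else 0) := by
    rw [show BEembed e0 ψ = (WithLp.equiv 2 ((Fin a × Fin d) → ℂ)).symm
        (fun pq => if pq.1 = e0 then ψ pq.2 else 0) from rfl,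
      WithLp.equiv_symm_apply, Matrix.toEuclideanCLM_toLp, PiLp.toLp_apply,
      Matrix.mulVec, dotProduct]
  have h2 : (Matrix.toEuclideanCLM (𝕜 := ℂ)
      (Matrix.of (fun j k : Fin d => W (e0, j) (e0, k))) ψ) j =
      ∑ k : Fin d, W (e0, j) (e0, k) * ψ k := by
    rw [show ψ = (WithLp.equiv 2 ((Fin d) → ℂ)).symm (WithLp.equiv 2 _ ψ) from rfl,
      WithLp.equiv_symm_apply, Matrix.toEuclideanCLM_toLp, PiLp.toLp_apply,
      Matrix.mulVec, dotProduct]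
    rfl
  rw [h1, h2, Fintype.sum_prod_type]
  simp [mul_ite, Finset.sum_ite_eq', Finset.sum_ite_irrel]

lemma toEuclideanCLM_mem_unitary {n : Type*} [Fintype n] [DecidableEq n]
    {M : Matrix n n ℂ} (hM : M ∈ Matrix.unitaryGroup n ℂ) :
    Matrix.toEuclideanCLM (𝕜 := ℂ) M ∈
      unitary (EuclideanSpace ℂ n →L[ℂ] EuclideanSpace ℂ n) := by
  rw [Unitary.mem_iff] at hM ⊢
  constructor
  · rw [← map_star, ← map_mul, hM.1, map_one]
  · rw [← map_star, ← map_mul, hM.2, map_one]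

/-- State-level error bound for block encodings of unitaries (used in Lemma 13):
if the top-left `d × d` block of a unitary `W` on `ℂ^a ⊗ ℂ^d` is `ε`-close in operator
norm to a unitary `U`, then for every unit vector `ψ`,
`‖W(e₁ ⊗ ψ) - e₁ ⊗ (Uψ)‖ ≤ ε + √(2ε)`. -/
theorem block_encoding_state_error (a d : ℕ) (ha : 0 < a) (hd : 0 < d)
    (W : Matrix (Fin a × Fin d) (Fin a × Fin d) ℂ)
    (hW : W ∈ Matrix.unitaryGroup (Fin a × Fin d) ℂ)
    (U : Matrix (Fin d) (Fin d) ℂ) (hU : U ∈ Matrix.unitaryGroup (Fin d) ℂ)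
    (ε : ℝ) (hε : ε ∈ Set.Icc (0 : ℝ) 1)
    (hblock :
      ‖Matrix.toEuclideanCLM (𝕜 := ℂ)
          (Matrix.of (fun j k : Fin d => W (⟨0, ha⟩, j) (⟨0, ha⟩, k)) - U)‖ ≤ ε)
    (ψ : EuclideanSpace ℂ (Fin d)) (hψ : ‖ψ‖ = 1) :
    ‖Matrix.toEuclideanCLM (𝕜 := ℂ) W
          ((WithLp.equiv 2 ((Fin a × Fin d) → ℂ)).symm
            (fun pq => if pq.1 = ⟨0, ha⟩ then ψ pq.2 else 0)) -
        (WithLp.equiv 2 ((Fin a × Fin d) → ℂ)).symm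
          (fun pq => if pq.1 = ⟨0, ha⟩ then (Matrix.toEuclideanCLM (𝕜 := ℂ) U ψ) pq.2 else 0)‖ ≤
      ε + Real.sqrt (2 * ε) := by
  obtain ⟨hε0, hε1⟩ := hε
  set e0 : Fin a := ⟨0, ha⟩ with he0
  set A : Matrix (Fin d) (Fin d) ℂ :=
    Matrix.of (fun j k : Fin d => W (e0, j) (e0, k)) with hA
  set u : EuclideanSpace ℂ (Fin d) := Matrix.toEuclideanCLM (𝕜 := ℂ) U ψ with hu
  set g : EuclideanSpace ℂ (Fin d) := Matrix.toEuclideanCLM (𝕜 := ℂ) A ψ with hg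
  set y : EuclideanSpace ℂ (Fin a × Fin d) :=
    Matrix.toEuclideanCLM (𝕜 := ℂ) W (BEembed e0 ψ) with hy
  show ‖y - BEembed e0 u‖ ≤ ε + Real.sqrt (2 * ε)
  -- norms of images under unitaries
  have hynorm : ‖y‖ = 1 := by
    rw [hy, ContinuousLinearMap.norm_map_of_mem_unitary (toEuclideanCLM_mem_unitary hW),
      BEembed_norm, hψ]
  have hunorm : ‖u‖ = 1 := by
    rw [hu, ContinuousLinearMap.norm_map_of_mem_unitary (toEuclideanCLM_mem_unitary hU), hψ]
  -- block estimate at the state level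
  have hgu : ‖g - u‖ ≤ ε := by
    have hsub : g - u = (Matrix.toEuclideanCLM (𝕜 := ℂ) (A - U)) ψ := by
      rw [map_sub]; rfl
    calc ‖g - u‖ = ‖(Matrix.toEuclideanCLM (𝕜 := ℂ) (A - U)) ψ‖ := by rw [hsub]
      _ ≤ ‖Matrix.toEuclideanCLM (𝕜 := ℂ) (A - U)‖ * ‖ψ‖ :=
          (Matrix.toEuclideanCLM (𝕜 := ℂ) (A - U)).le_opNorm ψ
      _ ≤ ε := by rw [hψ, mul_one]; exact hblock
  have hgnorm : 1 - ε ≤ ‖g‖ := by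
    have := norm_sub_norm_le u g
    rw [hunorm, norm_sub_rev] at this
    linarith [hgu]
  -- the remainder is orthogonal to the top block
  set r : EuclideanSpace ℂ (Fin a × Fin d) := y - BEembed e0 g with hr
  have hr0 : ∀ j : Fin d, r (e0, j) = 0 := by
    intro j
    rw [hr]
    rw [show (y - BEembed e0 g) (e0, j) = y (e0, j) - BEembed e0 g (e0, j) from rfl]
    rw [BEembed_apply]
    simp only [if_pos rfl]
    rw [hy, BEembed_zeroblock, ← hA, ← hg]
    simp
  have hinner : (inner ℂ (BEembed e0 g) r : ℂ) = 0 := by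
    rw [PiLp.inner_apply]
    apply Finset.sum_eq_zero
    rintro ⟨p, j⟩ -
    by_cases hp : p = e0
    · subst hp; rw [hr0 j]; simp
    · rw [RCLike.inner_apply, BEembed_apply]
      simp [hp]
  have hsum : ‖y‖ ^ 2 = ‖g‖ ^ 2 + ‖r‖ ^ 2 := by
    have hdecomp : y = BEembed e0 g + r := by rw [hr]; abel
    rw [hdecomp, norm_add_sq (𝕜 := ℂ), hinner, BEembed_norm]
    simp
  have hrsq : ‖r‖ ^ 2 ≤ 2 * ε := by
    nlinarith [norm_nonneg g, hynorm, hsum, hgnorm, hε0, hε1]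
  have hrnorm : ‖r‖ ≤ Real.sqrt (2 * ε) := by
    rw [show ‖r‖ = Real.sqrt (‖r‖ ^ 2) by rw [Real.sqrt_sq (norm_nonneg r)]]
    exact Real.sqrt_le_sqrt hrsq
  have hfinal : y - BEembed e0 u = BEembed e0 (g - u) + r := by
    rw [hr, ← BEembed_sub]; abel
  calc ‖y - BEembed e0 u‖ = ‖BEembed e0 (g - u) + r‖ := by rw [hfinal]
    _ ≤ ‖BEembed e0 (g - u)‖ + ‖r‖ := norm_add_le _ _
    _ ≤ ε + Real.sqrt (2 * ε) := add_le_add (by rw [BEembed_norm]; exact hgu) hrnorm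
end
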